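/- Let q ≥ 5 be an odd prime power. The incidence structure (P_1, C_1), where P_1 = {(1,x,y): x,y ∈ F_q*} and C_1 is the set of conics through e_1,e_2,e_3 (restricted to their points in P_1), is a generalized partial geometry PG(q-3, q-3; q-5, q-4, q-3): every block has q-2 points, every point lies on q-2 blocks, two points lie on at most one common block, and for every non-incident point-block pair the number of points of the block joined to the point is q-5, q-4, or q-3, with all three values attained. -/

import Mathlib

open Matrix

/-- Two points are joined if they are distinct and lie on a common block. -/
abbrev joinedIn {V : Type} [DecidableEq V] (Bl : Finset (Finset V)) (P Q : V) : Prop :=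
  P ≠ Q ∧ ∃ b ∈ Bl, P ∈ b ∧ Q ∈ b

/-- (𝒫, ℬ) is a generalized partial geometry PG(s,t;α₁,…,α_r) with {α₁,…,α_r} = αs:
two distinct points on at most one common block, each block has s+1 points, each point
on t+1 blocks, every anti-flag count lies in αs, and each value in αs is attained. -/
def IsGPG {V : Type} [Fintype V] [DecidableEq V] (Bl : Finset (Finset V))
    (s t : ℕ) (αs : Finset ℕ) : Prop :=
  (∀ P Q : V, P ≠ Q → (Bl.filter fun b => P ∈ b ∧ Q ∈ b).card ≤ 1) ∧
  (∀ b ∈ Bl, b.card = s + 1) ∧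
  (∀ P : V, (Bl.filter fun b => P ∈ b).card = t + 1) ∧
  (∀ (P : V), ∀ b ∈ Bl, P ∉ b → (b.filter fun Q => joinedIn Bl P Q).card ∈ αs) ∧
  (∀ α ∈ αs, ∃ (P : V), ∃ b ∈ Bl, P ∉ b ∧ (b.filter fun Q => joinedIn Bl P Q).card = α)

/-- (1,x,y) lies on the conic through e₁,e₂,e₃ with matrix !![0,a,b;a,0,1;b,1,0]. -/
abbrev onConic (F : Type) [Field F] (a b : F) (P : F × F) : Prop :=
  ![1, P.1, P.2] ⬝ᵥ (!![0, a, b; a, 0, 1; b, 1, 0] *ᵥ ![1, P.1, P.2]) = 0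

lemma two_ne_zero_of_odd_card {F : Type} [Field F] [Fintype F]
    (hodd : Odd (Fintype.card F)) : (2:F) ≠ 0 := by
  intro h
  have h2 : ringChar F ∣ 2 := (CharP.cast_eq_zero_iff F (ringChar F) 2).mp (by exact_mod_cast h)
  have hp : (ringChar F).Prime := CharP.char_is_prime F (ringChar F)
  have he : ringChar F = 2 := (Nat.prime_dvd_prime_iff_eq hp Nat.prime_two).mp h2
  obtain ⟨n, hpn, hcard⟩ := FiniteField.card F (ringChar F)
  rw [hcard, he] at hodd
  exact (Nat.not_odd_iff_even.mpr ((even_two).pow_of_ne_zero (by exact_mod_cast n.ne_zero))) hodd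

section
variable {F : Type} [Field F] [Fintype F] [DecidableEq F]
set_option linter.unusedSectionVars false

abbrev Pt (F : Type) [Field F] := {p : F × F // p.1 ≠ 0 ∧ p.2 ≠ 0}

def blk (a b : F) : Finset (Pt F) :=
  Finset.univ.filter (fun P : Pt F => onConic F a b P.1)

def CBl (F : Type) [Field F] [Fintype F] [DecidableEq F] : Finset (Finset (Pt F)) :=
  (Finset.univ.filter (fun ab : F × F => ab.1 ≠ 0 ∧ ab.2 ≠ 0)).image
    (fun ab => Finset.univ.filter
      (fun P : Pt F => onConic F ab.1 ab.2 P.1))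

lemma CBl_eq : CBl F = (Finset.univ.filter (fun ab : F × F => ab.1 ≠ 0 ∧ ab.2 ≠ 0)).image
    (fun ab => blk ab.1 ab.2) := rfl

lemma mem_CBl {B : Finset (Pt F)} :
    B ∈ CBl F ↔ ∃ a b : F, a ≠ 0 ∧ b ≠ 0 ∧ blk a b = B := by
  rw [CBl_eq, Finset.mem_image]
  constructor
  · rintro ⟨⟨a, b⟩, hab, rfl⟩
    simp only [Finset.mem_filter] at hab
    exact ⟨a, b, hab.2.1, hab.2.2, rfl⟩
  · rintro ⟨a, b, ha, hb, rfl⟩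
    exact ⟨(a, b), by simp [ha, hb], rfl⟩

variable (h2 : (2:F) ≠ 0)
include h2

lemma mem_blk {a b : F} {P : Pt F} :
    P ∈ blk a b ↔ a * P.1.1 + b * P.1.2 + P.1.1 * P.1.2 = 0 := by
  have : (![1, P.1.1, P.1.2] ⬝ᵥ (!![0, a, b; a, 0, 1; b, 1, 0] *ᵥ ![1, P.1.1, P.1.2]))
      = 2 * (a * P.1.1 + b * P.1.2 + P.1.1 * P.1.2) := by
    simp [dotProduct, Matrix.mulVec, Fin.sum_univ_three]
    ring
  rw [blk, Finset.mem_filter]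
  simp only [Finset.mem_univ, true_and, onConic, this, mul_eq_zero]
  tauto

/-- first coordinate of a conic point avoids -b -/
lemma fst_ne {a b : F} (ha : a ≠ 0) {P : Pt F} (hP : P ∈ blk a b) : P.1.1 ≠ -b := by
  rw [mem_blk h2] at hP
  intro h
  have hb : b ≠ 0 := by intro h0; exact P.2.1 (by rw [h, h0, neg_zero])
  rw [h] at hP
  have : a * b = 0 := by linear_combination -hP
  rcases mul_eq_zero.mp this with h' | h' <;> [exact ha h'; exact hb h']

lemma snd_ne {a b : F} (hb : b ≠ 0) {P : Pt F} (hP : P ∈ blk a b) : P.1.2 ≠ -a := by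
  rw [mem_blk h2] at hP
  intro h
  have ha : a ≠ 0 := by intro h0; exact P.2.2 (by rw [h, h0, neg_zero])
  rw [h] at hP
  have : a * b = 0 := by linear_combination -hP
  rcases mul_eq_zero.mp this with h' | h' <;> [exact ha h'; exact hb h']

/-- second coordinate is determined by the first -/
lemma snd_eq {a b : F} {P : Pt F} (hP : P ∈ blk a b) :
    P.1.2 * (P.1.1 + b) = -a * P.1.1 := by
  rw [mem_blk h2] at hP
  linear_combination hP

lemma fst_injOn {a b : F} (ha : a ≠ 0) {P Q : Pt F} (hP : P ∈ blk a b) (hQ : Q ∈ blk a b)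
    (h : P.1.1 = Q.1.1) : P = Q := by
  have h1 := snd_eq h2 hP
  have h2' := snd_eq h2 hQ
  have hxb : P.1.1 + b ≠ 0 := by
    intro h0; exact fst_ne h2 ha hP (eq_neg_of_add_eq_zero_left h0)
  rw [h] at h1
  have : (P.1.2 - Q.1.2) * (Q.1.1 + b) = 0 := by linear_combination h1 - h2'
  have hy : P.1.2 = Q.1.2 := by
    rcases mul_eq_zero.mp this with h' | h'
    · exact sub_eq_zero.mp h'
    · rw [h] at hxb; exact absurd h' hxb
  exact Subtype.ext (Prod.ext h hy)

/-- the determinant of two distinct conic points is nonzero -/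
lemma det_ne {a b : F} {P Q : Pt F} (hPQ : P ≠ Q)
    (h1 : P ∈ blk a b) (h2' : Q ∈ blk a b) :
    P.1.1 * Q.1.2 - P.1.2 * Q.1.1 ≠ 0 := by
  intro h
  rw [mem_blk h2] at h1 h2'
  have key : Q.1.1 * P.1.2 * (Q.1.1 - P.1.1) = 0 := by
    linear_combination P.1.1 * h2' - Q.1.1 * h1 - (b + Q.1.1) * h
  have hux : Q.1.1 = P.1.1 := by
    rcases mul_eq_zero.mp key with h' | h'
    · rcases mul_eq_zero.mp h' with h'' | h''
      · exact absurd h'' Q.2.1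
      · exact absurd h'' P.2.2
    · exact sub_eq_zero.mp h'
  have hvy : Q.1.2 = P.1.2 := by
    have : P.1.1 * (Q.1.2 - P.1.2) = 0 := by
      rw [hux] at h; linear_combination h
    rcases mul_eq_zero.mp this with h' | h'
    · exact absurd h' P.2.1
    · exact sub_eq_zero.mp h'
  exact hPQ (Subtype.ext (Prod.ext hux.symm hvy.symm))

/-- two distinct points lie on at most one conic -/
lemma conic_unique {a b a' b' : F} {P Q : Pt F} (hPQ : P ≠ Q)
    (h1 : P ∈ blk a b) (h2' : Q ∈ blk a b) (h3 : P ∈ blk a' b') (h4 : Q ∈ blk a' b') :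
    a = a' ∧ b = b' := by
  have hdet := det_ne h2 hPQ h1 h2'
  rw [mem_blk h2] at h1 h2' h3 h4
  have da : (a - a') * (P.1.1 * Q.1.2 - P.1.2 * Q.1.1) = 0 := by
    linear_combination Q.1.2 * (h1 - h3) - P.1.2 * (h2' - h4)
  have ha : a = a' := by
    rcases mul_eq_zero.mp da with h' | h'
    · exact sub_eq_zero.mp h'
    · exact absurd h' hdet
  have db : (b - b') * P.1.2 = 0 := by
    rw [ha] at h1; linear_combination h1 - h3
  have hbb : b = b' := by
    rcases mul_eq_zero.mp db with h' | h'
    · exact sub_eq_zero.mp h'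
    · exact absurd h' P.2.2
  exact ⟨ha, hbb⟩

lemma dom_prop {b : F} : ∀ u : F, u ∈ (Finset.univ \ {0, -b} : Finset F) →
    u ≠ 0 ∧ u + b ≠ 0 := by
  intro u hu
  simp only [Finset.mem_sdiff, Finset.mem_univ, Finset.mem_insert, Finset.mem_singleton,
    true_and, not_or] at hu
  exact ⟨hu.1, fun h => hu.2 (eq_neg_of_add_eq_zero_left h)⟩

omit h2 in
lemma dom_card {b : F} (hb : b ≠ 0) :
    (Finset.univ \ {0, -b} : Finset F).card = Fintype.card F - 2 := by
  rw [Finset.card_sdiff_of_subset (Finset.subset_univ _), Finset.card_univ]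
  congr 1
  rw [Finset.card_insert_of_notMem (by simp [eq_comm, neg_eq_zero, hb]),
    Finset.card_singleton]

lemma blk_card {a b : F} (ha : a ≠ 0) (hb : b ≠ 0) :
    (blk a b).card = Fintype.card F - 2 := by
  rw [← dom_card hb (F := F)]
  refine Finset.card_bij' (fun (P : Pt F) _ => P.1.1)
    (fun u hu => (⟨(u, -a * u / (u + b)),
      ⟨(dom_prop h2 u hu).1,
        div_ne_zero (mul_ne_zero (neg_ne_zero.mpr ha) (dom_prop h2 u hu).1)
          (dom_prop h2 u hu).2⟩⟩ : Pt F)) ?_ ?_ ?_ ?_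
  · intro P hP
    simp only [Finset.mem_sdiff, Finset.mem_univ, Finset.mem_insert, Finset.mem_singleton,
      true_and, not_or]
    exact ⟨P.2.1, fst_ne h2 ha hP⟩
  · intro u hu
    obtain ⟨hu0, hub⟩ := dom_prop h2 u hu
    rw [mem_blk h2]
    field_simp
    ring
  · intro P hP
    have hxb : P.1.1 + b ≠ 0 := fun h => fst_ne h2 ha hP (eq_neg_of_add_eq_zero_left h)
    have := snd_eq h2 hP
    apply Subtype.ext
    show (P.1.1, -a * P.1.1 / (P.1.1 + b)) = P.1
    have hsnd : -a * P.1.1 / (P.1.1 + b) = P.1.2 := by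
      field_simp
      linear_combination -this
    rw [hsnd]
  · intro u hu
    rfl

lemma joined_iff {P Q : Pt F} :
    joinedIn (CBl F) P Q ↔
      P.1.1 ≠ Q.1.1 ∧ P.1.2 ≠ Q.1.2 ∧ P.1.1 * Q.1.2 ≠ P.1.2 * Q.1.1 := by
  constructor
  · rintro ⟨hPQ, B, hB, hPB, hQB⟩
    obtain ⟨a, b, ha, hb, rfl⟩ := mem_CBl.mp hB
    refine ⟨?_, ?_, sub_ne_zero.mp (det_ne h2 hPQ hPB hQB)⟩
    · intro h; exact hPQ (fst_injOn h2 ha hPB hQB h)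
    · intro h
      rw [mem_blk h2] at hPB hQB
      have : (a + P.1.2) * (P.1.1 - Q.1.1) = 0 := by
        rw [← h] at hQB; linear_combination hPB - hQB
      rcases mul_eq_zero.mp this with h' | h'
      · exact snd_ne h2 hb (by rw [mem_blk h2]; exact hPB)
          (by linear_combination h')
      · exact hPQ (Subtype.ext (Prod.ext (sub_eq_zero.mp h') h))
  · rintro ⟨hx, hy, hdet⟩
    obtain ⟨⟨x, y⟩, x0, y0⟩ := P
    obtain ⟨⟨u, v⟩, u0, v0⟩ := Q
    simp only at hx hy hdet x0 y0 u0 v0 ⊢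
    have hd : x * v - y * u ≠ 0 := sub_ne_zero.mpr hdet
    set a := y * v * (u - x) / (x * v - y * u) with hadef
    set b := x * u * (y - v) / (x * v - y * u) with hbdef
    have ha : a ≠ 0 := div_ne_zero
      (mul_ne_zero (mul_ne_zero y0 v0) (sub_ne_zero.mpr (Ne.symm hx))) hd
    have hb : b ≠ 0 := div_ne_zero
      (mul_ne_zero (mul_ne_zero x0 u0) (sub_ne_zero.mpr hy)) hd
    refine ⟨by simp [Subtype.ext_iff, Prod.ext_iff]; intro h; exact absurd h hx,
      blk a b, mem_CBl.mpr ⟨a, b, ha, hb, rfl⟩, ?_, ?_⟩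
    · rw [mem_blk h2]
      show a * x + b * y + x * y = 0
      rw [hadef, hbdef]
      rw [div_mul_eq_mul_div, div_mul_eq_mul_div, ← add_div, div_add' _ _ _ hd,
        div_eq_zero_iff]
      left
      ring
    · rw [mem_blk h2]
      show a * u + b * v + u * v = 0
      rw [hadef, hbdef]
      rw [div_mul_eq_mul_div, div_mul_eq_mul_div, ← add_div, div_add' _ _ _ hd,
        div_eq_zero_iff]
      left
      ring

end

section more
variable {F : Type} [Field F] [Fintype F] [DecidableEq F]
variable (h2 : (2:F) ≠ 0) (hq5 : 5 ≤ Fintype.card F)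
set_option linter.unusedSectionVars false
include h2 hq5

lemma blk_inj {a b a' b' : F} (ha : a ≠ 0) (hb : b ≠ 0) (ha' : a' ≠ 0) (hb' : b' ≠ 0)
    (h : blk a b = blk (F := F) a' b') : a = a' ∧ b = b' := by
  have hcard : 1 < (blk (F := F) a b).card := by
    rw [blk_card h2 ha hb]; omega
  obtain ⟨P, hP, Q, hQ, hPQ⟩ := Finset.one_lt_card.mp hcard
  exact conic_unique h2 hPQ hP hQ (h ▸ hP) (h ▸ hQ)

lemma degree (P : Pt F) :
    ((CBl F).filter (fun B => P ∈ B)).card = Fintype.card F - 2 := by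
  rw [CBl_eq, Finset.filter_image, Finset.card_image_of_injOn]
  · -- count pairs (a,b) with P on blk a b
    have : ((Finset.univ.filter (fun ab : F × F => ab.1 ≠ 0 ∧ ab.2 ≠ 0)).filter
        (fun ab => P ∈ blk ab.1 ab.2)).card
        = (Finset.univ \ {0, -P.1.1} : Finset F).card := by
      refine Finset.card_bij' (fun ab _ => ab.2)
        (fun c hc => (-P.1.2 * (c + P.1.1) / P.1.1, c)) ?_ ?_ ?_ ?_
      · rintro ⟨a, b⟩ hab
        simp only [Finset.mem_filter, Finset.mem_univ, true_and] at hab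
        obtain ⟨⟨ha, hb⟩, hPm⟩ := hab
        simp only [Finset.mem_sdiff, Finset.mem_univ, Finset.mem_insert,
          Finset.mem_singleton, true_and, not_or]
        refine ⟨hb, fun h => fst_ne h2 ha hPm ?_⟩
        rw [h, neg_neg]
      · intro c hc
        obtain ⟨hc0, hcx⟩ := dom_prop (b := P.1.1) h2 c hc
        simp only [Finset.mem_filter, Finset.mem_univ, true_and]
        refine ⟨⟨div_ne_zero (mul_ne_zero (neg_ne_zero.mpr P.2.2) hcx) P.2.1, hc0⟩, ?_⟩
        rw [mem_blk h2]
        have hx0 := P.2.1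
        field_simp
        ring
      · rintro ⟨a, b⟩ hab
        simp only [Finset.mem_filter, Finset.mem_univ, true_and] at hab
        obtain ⟨⟨ha, hb⟩, hPm⟩ := hab
        rw [mem_blk h2] at hPm
        have hx0 := P.2.1
        have heq : -P.1.2 * (b + P.1.1) / P.1.1 = a := by
          field_simp
          linear_combination -hPm
        rw [Prod.mk.injEq]
        exact ⟨heq, rfl⟩
      · intro c hc
        rfl
    rw [this, dom_card P.2.1]
  · rintro ⟨a, b⟩ hab ⟨a', b'⟩ hab' h
    simp only [Finset.coe_filter, Set.mem_setOf_eq, Finset.mem_filter] at hab hab'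
    have := blk_inj h2 hq5 hab.1.2.1 hab.1.2.2 hab'.1.2.1 hab'.1.2.2 h
    simp [Prod.ext_iff, this.1, this.2]

end more

section count
variable {F : Type} [Field F] [Fintype F] [DecidableEq F]
variable (h2 : (2:F) ≠ 0)
set_option linter.unusedSectionVars false
include h2

lemma not_joined_iff (P Q : Pt F) : ¬ joinedIn (CBl F) P Q ↔
    P.1.1 = Q.1.1 ∨ P.1.2 = Q.1.2 ∨ P.1.1 * Q.1.2 = P.1.2 * Q.1.1 := by
  rw [joined_iff h2]
  tauto

lemma mk_mem_blk {a b u : F} (ha : a ≠ 0) (hu : u ≠ 0) (hub : u + b ≠ 0) :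
    (⟨(u, -a * u / (u + b)), hu,
      div_ne_zero (mul_ne_zero (neg_ne_zero.mpr ha) hu) hub⟩ : Pt F) ∈ blk a b := by
  rw [mem_blk h2]
  show a * u + b * (-a * u / (u + b)) + u * (-a * u / (u + b)) = 0
  field_simp
  ring

/-- the set of first coordinates of points of blk a b NOT joined to P -/
lemma badF_eq {a b : F} (ha : a ≠ 0) (hb : b ≠ 0) (P : Pt F) (hPB : P ∉ blk a b) :
    ((blk a b).filter (fun Q => ¬ joinedIn (CBl F) P Q)).image (fun Q => Q.1.1)
      = (if P.1.1 = -b then (∅ : Finset F) else {P.1.1})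
        ∪ (if P.1.2 = -a then ∅ else {-b * P.1.2 / (a + P.1.2)})
        ∪ (if a * P.1.1 + b * P.1.2 = 0 then ∅
            else {-(a * P.1.1 + b * P.1.2) / P.1.2}) := by
  have hx0 : P.1.1 ≠ 0 := P.2.1
  have hy0 : P.1.2 ≠ 0 := P.2.2
  have hE : a * P.1.1 + b * P.1.2 + P.1.1 * P.1.2 ≠ 0 := by
    rw [mem_blk h2] at hPB; exact hPB
  ext u
  simp only [Finset.mem_image, Finset.mem_filter, Finset.mem_union]
  constructor
  · rintro ⟨Q, ⟨hQblk, hQnj⟩, rfl⟩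
    have hu0 : Q.1.1 ≠ 0 := Q.2.1
    have hv0 : Q.1.2 ≠ 0 := Q.2.2
    have hunb : Q.1.1 ≠ -b := fst_ne h2 ha hQblk
    have he : a * Q.1.1 + b * Q.1.2 + Q.1.1 * Q.1.2 = 0 := (mem_blk h2).mp hQblk
    rcases (not_joined_iff h2 P Q).mp hQnj with h | h | h
    · left; left
      rw [if_neg (by rw [h]; exact hunb)]
      simp [h]
    · left; right
      have hay : a + P.1.2 ≠ 0 := by
        intro h0
        have h1 : Q.1.1 * (a + P.1.2) = -(b * P.1.2) := by
          rw [h]; linear_combination he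
        rw [h0, mul_zero] at h1
        exact (mul_ne_zero hb hy0) (by linear_combination h1)
      rw [if_neg (fun hya => hay (by rw [hya]; ring))]
      have : Q.1.1 = -b * P.1.2 / (a + P.1.2) := by
        rw [eq_div_iff hay, h]
        linear_combination he
      simp [this]
    · right
      have key : Q.1.1 * (P.1.2 * Q.1.1 + b * P.1.2 + a * P.1.1) = 0 := by
        linear_combination P.1.1 * he - (Q.1.1 + b) * h
      have h3 : P.1.2 * Q.1.1 + b * P.1.2 + a * P.1.1 = 0 := by
        rcases mul_eq_zero.mp key with h' | h'
        · exact absurd h' hu0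
        · exact h'
      have hne : a * P.1.1 + b * P.1.2 ≠ 0 := by
        intro h0
        have : P.1.2 * Q.1.1 = 0 := by linear_combination h3 - h0
        exact (mul_ne_zero hy0 hu0) this
      rw [if_neg hne]
      have : Q.1.1 = -(a * P.1.1 + b * P.1.2) / P.1.2 := by
        rw [eq_div_iff hy0]
        linear_combination h3
      simp [this]
  · intro hmem
    rcases hmem with (h | h) | h
    · by_cases hxb : P.1.1 = -b
      · rw [if_pos hxb] at h; exact absurd h (Finset.notMem_empty u)
      · rw [if_neg hxb, Finset.mem_singleton] at h
        subst h
        have hub : P.1.1 + b ≠ 0 := fun h0 => hxb (eq_neg_of_add_eq_zero_left h0)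
        refine ⟨⟨(P.1.1, -a * P.1.1 / (P.1.1 + b)), hx0,
          div_ne_zero (mul_ne_zero (neg_ne_zero.mpr ha) hx0) hub⟩,
          ⟨mk_mem_blk h2 ha hx0 hub, ?_⟩, rfl⟩
        rw [not_joined_iff h2]
        left; rfl
    · by_cases hya : P.1.2 = -a
      · rw [if_pos hya] at h; exact absurd h (Finset.notMem_empty u)
      · rw [if_neg hya, Finset.mem_singleton] at h
        have hay : a + P.1.2 ≠ 0 := fun h0 => hya (by linear_combination h0)
        have hu0 : u ≠ 0 := by
          rw [h]; exact div_ne_zero (mul_ne_zero (neg_ne_zero.mpr hb) hy0) hay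
        have hub : u + b ≠ 0 := by
          rw [h]
          intro h0
          have : a * b = 0 := by
            field_simp at h0
            linear_combination h0
          exact (mul_ne_zero ha hb) this
        refine ⟨⟨(u, -a * u / (u + b)), hu0,
          div_ne_zero (mul_ne_zero (neg_ne_zero.mpr ha) hu0) hub⟩,
          ⟨mk_mem_blk h2 ha hu0 hub, ?_⟩, rfl⟩
        rw [not_joined_iff h2]
        right; left
        show P.1.2 = -a * u / (u + b)
        rw [eq_div_iff hub, h]
        field_simp
        ring
    · by_cases hsum : a * P.1.1 + b * P.1.2 = 0
      · rw [if_pos hsum] at h; exact absurd h (Finset.notMem_empty u)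
      · rw [if_neg hsum, Finset.mem_singleton] at h
        have hu0 : u ≠ 0 := by
          rw [h]; exact div_ne_zero (neg_ne_zero.mpr hsum) hy0
        have hub : u + b ≠ 0 := by
          rw [h]
          intro h0
          have : a * P.1.1 = 0 := by
            field_simp at h0
            linear_combination -h0
          exact (mul_ne_zero ha hx0) this
        refine ⟨⟨(u, -a * u / (u + b)), hu0,
          div_ne_zero (mul_ne_zero (neg_ne_zero.mpr ha) hu0) hub⟩,
          ⟨mk_mem_blk h2 ha hu0 hub, ?_⟩, rfl⟩
        rw [not_joined_iff h2]
        right; right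
        show P.1.1 * (-a * u / (u + b)) = P.1.2 * u
        have hyub : P.1.2 * (u + b) = -(a * P.1.1) := by
          rw [h]; field_simp; ring
        rw [mul_div_assoc', div_eq_iff hub]
        linear_combination -u * hyub

lemma bad_card {a b : F} (ha : a ≠ 0) (hb : b ≠ 0) (P : Pt F) (hPB : P ∉ blk a b) :
    ((blk a b).filter (fun Q => ¬ joinedIn (CBl F) P Q)).card =
      (if P.1.1 = -b then 0 else 1) + (if P.1.2 = -a then 0 else 1) +
      (if a * P.1.1 + b * P.1.2 = 0 then 0 else 1) := by
  have hinj : Set.InjOn (fun Q : Pt F => Q.1.1)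
      ((blk a b).filter (fun Q => ¬ joinedIn (CBl F) P Q)) := by
    intro Q1 hQ1 Q2 hQ2 hEq
    simp only [Finset.coe_filter, Set.mem_setOf_eq, Finset.mem_filter] at hQ1 hQ2
    exact fst_injOn h2 ha hQ1.1 hQ2.1 hEq
  rw [← Finset.card_image_of_injOn hinj, badF_eq h2 ha hb P hPB]
  have hx0 : P.1.1 ≠ 0 := P.2.1
  have hy0 : P.1.2 ≠ 0 := P.2.2
  have hE : a * P.1.1 + b * P.1.2 + P.1.1 * P.1.2 ≠ 0 := by
    rw [mem_blk h2] at hPB; exact hPB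
  have hd12 : ∀ (hay : a + P.1.2 ≠ 0), P.1.1 ≠ -b * P.1.2 / (a + P.1.2) := by
    intro hay h0
    rw [eq_div_iff hay] at h0
    exact hE (by linear_combination h0)
  have hd13 : P.1.1 ≠ -(a * P.1.1 + b * P.1.2) / P.1.2 := by
    intro h0
    rw [eq_div_iff hy0] at h0
    exact hE (by linear_combination h0)
  have hd23 : ∀ (hay : a + P.1.2 ≠ 0),
      -b * P.1.2 / (a + P.1.2) ≠ -(a * P.1.1 + b * P.1.2) / P.1.2 := by
    intro hay h0
    rw [div_eq_div_iff hay hy0] at h0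
    have h5 : a * (a * P.1.1 + b * P.1.2 + P.1.1 * P.1.2) = 0 := by
      linear_combination h0
    rcases mul_eq_zero.mp h5 with h' | h'
    · exact ha h'
    · exact hE h'
  split_ifs with g1 g2 g3 g3 g2 g3 g3
  · simp
  · simp
  · simp
  · have hay : a + P.1.2 ≠ 0 := fun h0 => g2 (by linear_combination h0)
    rw [Finset.empty_union, ← Finset.insert_eq,
      Finset.card_insert_of_notMem (by simpa using hd23 hay), Finset.card_singleton]
  · simp
  · rw [Finset.union_empty, ← Finset.insert_eq,
      Finset.card_insert_of_notMem (by simpa using hd13), Finset.card_singleton]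
  · have hay : a + P.1.2 ≠ 0 := fun h0 => g2 (by linear_combination h0)
    rw [Finset.union_empty, ← Finset.insert_eq,
      Finset.card_insert_of_notMem (by simpa using hd12 hay), Finset.card_singleton]
  · have hay : a + P.1.2 ≠ 0 := fun h0 => g2 (by linear_combination h0)
    rw [Finset.union_assoc, ← Finset.insert_eq, ← Finset.insert_eq,
      Finset.card_insert_of_notMem (by simp only [Finset.mem_insert, Finset.mem_singleton]; push_neg; exact ⟨hd12 hay, hd13⟩),
      Finset.card_insert_of_notMem (by simpa using hd23 hay), Finset.card_singleton]

lemma N_pos {a b : F} (ha : a ≠ 0) (hb : b ≠ 0) (P : Pt F) :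
    1 ≤ (if P.1.1 = -b then 0 else 1) + (if P.1.2 = -a then 0 else 1) +
      (if a * P.1.1 + b * P.1.2 = 0 then 0 else 1) := by
  split_ifs with g1 g2 g3 <;> try omega
  exfalso
  rw [g1, g2] at g3
  have : a * b * 2 = 0 := by linear_combination -g3
  rcases mul_eq_zero.mp this with h' | h'
  · exact (mul_ne_zero ha hb) h'
  · exact h2 h'

lemma N_le {a b : F} (P : Pt F) :
    (if P.1.1 = -b then 0 else 1) + (if P.1.2 = -a then 0 else 1) +
      (if a * P.1.1 + b * P.1.2 = 0 then 0 else 1) ≤ 3 := by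
  split_ifs <;> omega

lemma joined_card {a b : F} (ha : a ≠ 0) (hb : b ≠ 0) (P : Pt F) (hPB : P ∉ blk a b) :
    ((blk a b).filter (fun Q => joinedIn (CBl F) P Q)).card =
      (Fintype.card F - 2) -
      ((if P.1.1 = -b then 0 else 1) + (if P.1.2 = -a then 0 else 1) +
       (if a * P.1.1 + b * P.1.2 = 0 then 0 else 1)) := by
  have hsplit := Finset.card_filter_add_card_filter_not
    (s := blk a b) (p := fun Q => joinedIn (CBl F) P Q)
  rw [blk_card h2 ha hb, bad_card h2 ha hb P hPB] at hsplit
  omega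

end count

section final
variable {F : Type} [Field F] [Fintype F] [DecidableEq F]
set_option linter.unusedSectionVars false

lemma exists_avoid (s : Finset F) (h : s.card < Fintype.card F) : ∃ x : F, x ∉ s := by
  by_contra h'
  push_neg at h'
  have hsub : (Finset.univ : Finset F) ⊆ s := fun x _ => h' x
  have := Finset.card_le_card hsub
  rw [Finset.card_univ] at this
  omega

end final

/-- (𝒫₁, 𝒞₁) is a generalized partial geometry PG(q-3, q-3; q-5, q-4, q-3). -/
theorem stmt_4 (F : Type) [Field F] [Fintype F] [DecidableEq F] (q : ℕ)
    (hq : Fintype.card F = q) (hodd : Odd q) (hq5 : 5 ≤ q) :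
    IsGPG (V := {p : F × F // p.1 ≠ 0 ∧ p.2 ≠ 0})
      ((Finset.univ.filter (fun ab : F × F => ab.1 ≠ 0 ∧ ab.2 ≠ 0)).image
        (fun ab => Finset.univ.filter
          (fun P : {p : F × F // p.1 ≠ 0 ∧ p.2 ≠ 0} => onConic F ab.1 ab.2 P.1)))
      (q - 3) (q - 3) {q - 5, q - 4, q - 3} := by
  subst hq
  have h2 : (2:F) ≠ 0 := two_ne_zero_of_odd_card hodd
  have h1 : (1:F) ≠ 0 := one_ne_zero
  have hm1 : (-1:F) ≠ 0 := by simp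
  show IsGPG (CBl F) (Fintype.card F - 3) (Fintype.card F - 3) {Fintype.card F - 5, Fintype.card F - 4, Fintype.card F - 3}
  refine ⟨?_, ?_, ?_, ?_, ?_⟩
  · -- at most one common block
    intro P Q hPQ
    rw [Finset.card_le_one]
    intro B1 hB1 B2 hB2
    rw [Finset.mem_filter] at hB1 hB2
    obtain ⟨a, b, ha, hb, rfl⟩ := mem_CBl.mp hB1.1
    obtain ⟨a', b', ha', hb', rfl⟩ := mem_CBl.mp hB2.1
    obtain ⟨heqa, heqb⟩ := conic_unique h2 hPQ hB1.2.1 hB1.2.2 hB2.2.1 hB2.2.2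
    rw [heqa, heqb]
  · -- block size
    intro B hB
    obtain ⟨a, b, ha, hb, rfl⟩ := mem_CBl.mp hB
    rw [blk_card h2 ha hb]
    omega
  · -- point degree
    intro P
    rw [degree h2 hq5 P]
    omega
  · -- anti-flag counts
    intro P B hB hPB
    obtain ⟨a, b, ha, hb, rfl⟩ := mem_CBl.mp hB
    rw [joined_card h2 ha hb P hPB]
    have := N_pos h2 (b := b) ha hb P
    have := N_le h2 (a := a) (b := b) P
    simp only [Finset.mem_insert, Finset.mem_singleton]
    omega
  · -- attainment
    intro α hα
    simp only [Finset.mem_insert, Finset.mem_singleton] at hα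
    rcases hα with rfl | rfl | rfl
    · -- α = q - 5 : a = b = 1, P = (1, y₀)
      obtain ⟨y₀, hy₀⟩ := exists_avoid ({0, -1, -(2⁻¹ : F)} : Finset F)
        (lt_of_le_of_lt (Finset.card_le_three ..) (by omega))
      simp only [Finset.mem_insert, Finset.mem_singleton, not_or] at hy₀
      obtain ⟨hy0, hyn1, hyn2⟩ := hy₀
      have h2y : 1 + 2 * y₀ ≠ 0 := by
        intro h0
        apply hyn2
        field_simp
        linear_combination h0
      refine ⟨⟨(1, y₀), h1, hy0⟩, blk 1 1, mem_CBl.mpr ⟨1, 1, h1, h1, rfl⟩, ?_, ?_⟩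
      all_goals
        set P : Pt F := ⟨(1, y₀), h1, hy0⟩ with hPdef
        have e1 : P.1.1 = 1 := rfl
        have e2 : P.1.2 = y₀ := rfl
        have hPB : P ∉ blk 1 1 := by
          rw [mem_blk h2, e1, e2]
          intro h0; exact h2y (by linear_combination h0)
      · exact hPB
      · rw [joined_card h2 h1 h1 P hPB, e1, e2]
        rw [if_neg (by intro h0; exact h2 (by linear_combination h0)),
          if_neg hyn1,
          if_neg (by intro h0; exact hyn1 (by linear_combination h0))]
        omega
    · -- α = q - 4 : b = 1, x₀ = -1, y₀ = 1, a generic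
      obtain ⟨a, hA⟩ := exists_avoid ({0, 1, -1} : Finset F)
        (lt_of_le_of_lt (Finset.card_le_three ..) (by omega))
      simp only [Finset.mem_insert, Finset.mem_singleton, not_or] at hA
      obtain ⟨ha0, ha1, han1⟩ := hA
      refine ⟨⟨(-1, 1), hm1, h1⟩, blk a 1, mem_CBl.mpr ⟨a, 1, ha0, h1, rfl⟩, ?_, ?_⟩
      all_goals
        set P : Pt F := ⟨(-1, 1), hm1, h1⟩ with hPdef
        have e1 : P.1.1 = -1 := rfl
        have e2 : P.1.2 = 1 := rfl
        have hPB : P ∉ blk a 1 := by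
          rw [mem_blk h2, e1, e2]
          intro h0; exact ha0 (by linear_combination -h0)
      · exact hPB
      · rw [joined_card h2 ha0 h1 P hPB, e1, e2]
        rw [if_pos rfl,
          if_neg (by intro h0; exact han1 (by linear_combination h0)),
          if_neg (by intro h0; exact ha1 (by linear_combination -h0))]
        omega
    · -- α = q - 3 : a = b = 1, P = (-1, -1)
      refine ⟨⟨(-1, -1), hm1, hm1⟩, blk 1 1, mem_CBl.mpr ⟨1, 1, h1, h1, rfl⟩, ?_, ?_⟩
      all_goals
        set P : Pt F := ⟨(-1, -1), hm1, hm1⟩ with hPdef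
        have e1 : P.1.1 = -1 := rfl
        have e2 : P.1.2 = -1 := rfl
        have hPB : P ∉ blk 1 1 := by
          rw [mem_blk h2, e1, e2]
          intro h0; exact h1 (by linear_combination -h0)
      · exact hPB
      · rw [joined_card h2 h1 h1 P hPB, e1, e2]
        rw [if_pos rfl,
          if_neg (by intro h0; exact h2 (by linear_combination -h0))]
        omega
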